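/- arXiv:1810.03960 — 5 statements merged into one kernel-verified Lean document; each statement's English description precedes it below -/
import Mathlib

section
/- Let p be an odd prime and suppose there exist a, δ ∈ F_p with δ² = 1, 2a² − 3a + 2 = 0, and t := δ(2a−1)i (where i² = −1 in F_p or an extension) is a root of p₊(t) or p₋(t) where p_±(t) = t(t²−2) ± (t²−1). Then p = 29. -/
/-- Let `p` be an odd prime and suppose there exist `a, δ ∈ F_p`
with `δ² = 1`, `2a² − 3a + 2 = 0`, and `t := δ(2a−1)i` (where `i² = −1` in `F_p` or
an extension field `K`) is a root of `p₊` or `p₋`, where `p_±(t) = t(t²−2) ± (t²−1)`.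
Then `p = 29`. -/
theorem prime_eq_twentynine
    (p : ℕ) (hp : p.Prime) (hodd : p ≠ 2)
    (K : Type*) [Field K] [CharP K p]
    (a δ : ZMod p) (hδ : δ ^ 2 = 1) (ha : 2 * a ^ 2 - 3 * a + 2 = 0)
    (i : K) (hi : i ^ 2 = -1)
    (t : K)
    (ht : t = (ZMod.castHom (dvd_refl p) K δ) *
        (2 * (ZMod.castHom (dvd_refl p) K a) - 1) * i)
    (hroot : t * (t ^ 2 - 2) + (t ^ 2 - 1) = 0 ∨
      t * (t ^ 2 - 2) - (t ^ 2 - 1) = 0) :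
    p = 29 := by
  haveI := Fact.mk hp
  set f := ZMod.castHom (dvd_refl p) K with hf
  set A : K := f a with hA'
  set D : K := f δ with hD'
  have hD2 : D ^ 2 = 1 := by
    rw [hD', ← map_pow, hδ, map_one]
  have hA : 2 * A ^ 2 - 3 * A + 2 = 0 := by
    have := congrArg f ha
    push_cast [map_sub, map_add, map_mul, map_pow, map_ofNat] at this
    simpa [hA'] using this
  -- square the root condition
  have hsq : t ^ 2 * (t ^ 2 - 2) ^ 2 = (t ^ 2 - 1) ^ 2 := by
    rcases hroot with h | h
    · linear_combination (t * (t ^ 2 - 2) - (t ^ 2 - 1)) * h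
    · linear_combination (t * (t ^ 2 - 2) + (t ^ 2 - 1)) * h
  have ht2 : t ^ 2 = -(2 * A - 1) ^ 2 := by
    rw [ht]
    linear_combination ((2 * A - 1) ^ 2 * i ^ 2) * hD2 + (2 * A - 1) ^ 2 * hi
  rw [ht2] at hsq
  have h29 : (29 : K) = 0 := by
    linear_combination (7 - 8 * A) * hsq +
      (60 - 228 * A + 616 * A ^ 2 - 784 * A ^ 3 + 608 * A ^ 4 - 256 * A ^ 5) * hA
  have hdvd : p ∣ 29 := by
    have := (CharP.cast_eq_zero_iff K p 29).mp (by exact_mod_cast h29)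
    exact this
  rcases (Nat.Prime.eq_one_or_self_of_dvd (by norm_num) p hdvd) with h | h
  · exact absurd h hp.one_lt.ne'
  · exact h
end

section
/- Let p be an odd prime and suppose there exist a, δ in F_p with δ² = 1, 4a³ − 8a² + 8a − 3 = 0, and t := δ(2a−1)i (with i² = −1) a root of p₊ or p₋ where p_±(t) = t(t²−2) ± (t²−1). Then p = 41. -/
/-- Let `p` be an odd prime and suppose there exist `a, δ ∈ F_p`
with `δ² = 1`, `4a³ − 8a² + 8a − 3 = 0`, and `t := δ(2a−1)i` (with `i² = −1`, in
`F_p` or an extension field `K`) a root of `p₊` or `p₋`, where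
`p_±(t) = t(t²−2) ± (t²−1)`. Then `p = 41`. -/
theorem prime_eq_fortyone
    (p : ℕ) (hp : p.Prime) (hodd : p ≠ 2)
    (K : Type*) [Field K] [CharP K p]
    (a δ : ZMod p) (hδ : δ ^ 2 = 1)
    (ha : 4 * a ^ 3 - 8 * a ^ 2 + 8 * a - 3 = 0)
    (i : K) (hi : i ^ 2 = -1)
    (t : K)
    (ht : t = (ZMod.castHom (dvd_refl p) K δ) *
        (2 * (ZMod.castHom (dvd_refl p) K a) - 1) * i)
    (hroot : t * (t ^ 2 - 2) + (t ^ 2 - 1) = 0 ∨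
      t * (t ^ 2 - 2) - (t ^ 2 - 1) = 0) :
    p = 41 := by
  haveI : Fact p.Prime := ⟨hp⟩
  set φ := ZMod.castHom (dvd_refl p) K with hφ
  set d : K := φ δ with hd
  set b : K := 2 * φ a - 1 with hb
  have hδK : d ^ 2 = 1 := by
    rw [hd, ← map_pow, hδ, map_one]
  -- In each case, derive (d*b*(b^2+2))*i = ±(b^2+1), then square.
  have key : b ^ 2 * (b ^ 2 + 2) ^ 2 + (b ^ 2 + 1) ^ 2 = 0 := by
    subst ht
    rcases hroot with h | h
    · have h1 : (d * b * (b ^ 2 + 2)) * i = -(b ^ 2 + 1) := by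
        linear_combination -h + (d * b ^ 3 * i + b ^ 2) * i ^ 2 * hδK
          + (d * b ^ 3 * i + b ^ 2) * hi
      have h2 : (d * b * (b ^ 2 + 2)) ^ 2 * i ^ 2 = (b ^ 2 + 1) ^ 2 := by
        rw [← mul_pow, h1]; ring
      rw [hi] at h2
      linear_combination -h2 - b ^ 2 * (b ^ 2 + 2) ^ 2 * hδK
    · have h1 : (d * b * (b ^ 2 + 2)) * i = (b ^ 2 + 1) := by
        linear_combination -h + (d * b ^ 3 * i - b ^ 2) * i ^ 2 * hδK
          + (d * b ^ 3 * i - b ^ 2) * hi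
      have h2 : (d * b * (b ^ 2 + 2)) ^ 2 * i ^ 2 = (b ^ 2 + 1) ^ 2 := by
        rw [← mul_pow, h1]
      rw [hi] at h2
      linear_combination -h2 - b ^ 2 * (b ^ 2 + 2) ^ 2 * hδK
  -- transfer the relation back to ZMod p via injectivity of φ
  have hF : (2 * a - 1) ^ 2 * ((2 * a - 1) ^ 2 + 2) ^ 2 + ((2 * a - 1) ^ 2 + 1) ^ 2
      = 0 := by
    apply φ.injective
    rw [map_zero]
    simp only [map_add, map_mul, map_pow, map_sub, map_one, map_ofNat]
    linear_combination key
  -- Bezout identity: U(a)*g(a) + V(a)*F(a) = 41 in ℤ[a]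
  have h41 : ((41 : ℕ) : ZMod p) = 0 := by
    push_cast
    linear_combination (112 - 540 * a + 928 * a ^ 2 - 1168 * a ^ 3 + 704 * a ^ 4
      - 320 * a ^ 5) * ha + (29 - 24 * a + 20 * a ^ 2) * hF
  have hdvd : p ∣ 41 := (ZMod.natCast_eq_zero_iff 41 p).mp h41
  exact (Nat.prime_dvd_prime_iff_eq hp (by norm_num)).mp hdvd
end

section
/- Let ω satisfy ω² + ω + 1 = 0 in F_p (p prime, p ≡ 1 mod 3, p ≠ 7), and suppose there exist a, b, c ∈ F_p with a ≠ 0, a² + bc + 1 = 0, 3a² = ω − 2, and t with t² = 2 − ω a root of p₊(t) or p₋(t), where p_±(t) = t(t²−2) ± (t²−1). Then p = 13 (and ω = 3 in F₁₃). -/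
/-- Let `ω` satisfy `ω² + ω + 1 = 0` in `F_p` (`p` prime,
`p ≡ 1 mod 3`, `p ≠ 7`), and suppose there exist `a, b, c ∈ F_p` with `a ≠ 0`,
`a² + bc + 1 = 0`, `3a² = ω − 2`, and `t` (in `F_p` or a quadratic extension `K`)
with `t² = 2 − ω` a root of `p₊(t)` or `p₋(t)`, where `p_±(t) = t(t²−2) ± (t²−1)`.
Then `p = 13` (and `ω = 3` in `F₁₃`). -/
theorem prime_eq_thirteen_of_omega
    (p : ℕ) (hp : p.Prime) (hmod : p % 3 = 1) (hp7 : p ≠ 7)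
    (K : Type*) [Field K] [CharP K p]
    (ω a b c : ZMod p) (hω : ω ^ 2 + ω + 1 = 0)
    (ha0 : a ≠ 0) (habc : a ^ 2 + b * c + 1 = 0) (h3a : 3 * a ^ 2 = ω - 2)
    (t : K) (ht : t ^ 2 = ZMod.castHom (dvd_refl p) K (2 - ω))
    (hroot : t * (t ^ 2 - 2) + (t ^ 2 - 1) = 0 ∨
      t * (t ^ 2 - 2) - (t ^ 2 - 1) = 0) :
    p = 13 ∧ ω = 3 := by
  haveI := Fact.mk hp
  set f := ZMod.castHom (dvd_refl p) K with hf
  set x := f ω with hxdef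
  have hx : x ^ 2 + x + 1 = 0 := by
    have := congrArg f hω
    simpa [map_add, map_pow, map_one] using this
  have ht' : t ^ 2 = 2 - x := by
    rw [ht, map_sub, map_ofNat]
  -- In both cases, (t*x)^2 = (1-x)^2
  have hE : (2 - x) * x ^ 2 = (1 - x) ^ 2 := by
    rcases hroot with h | h
    · have h1 : t * x = 1 - x := by linear_combination -h + (t + 1) * ht'
      have h2 : t ^ 2 * x ^ 2 = (1 - x) ^ 2 := by
        rw [← h1]; ring
      rw [ht'] at h2; exact h2
    · have h1 : t * x = x - 1 := by linear_combination -h + (t - 1) * ht'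
      have h2 : t ^ 2 * x ^ 2 = (1 - x) ^ 2 := by
        rw [show (1 - x) ^ 2 = (x - 1) ^ 2 by ring, ← h1]; ring
      rw [ht'] at h2; exact h2
  have hx3 : x = 3 := by linear_combination hE + (x - 2) * hx
  have hω3 : ω = 3 := by
    have hinj := f.injective
    apply hinj
    rw [← hxdef, hx3, map_ofNat]
  have h13 : ((13 : ℕ) : ZMod p) = 0 := by
    rw [hω3] at hω; push_cast; linear_combination hω
  have hdvd : p ∣ 13 := (ZMod.natCast_eq_zero_iff 13 p).mp h13
  exact ⟨(Nat.prime_dvd_prime_iff_eq hp (by norm_num)).mp hdvd, hω3⟩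
end

section
/- Let G be a transitive permutation group of degree 15 containing an element of order 7 and a 3-cycle, all of whose listed generators are even permutations. Then G = A₁₅. -/
set_option linter.unusedSectionVars false
open Equiv Equiv.Perm Subgroup MulAction

variable {α : Type*} [Fintype α] [DecidableEq α]

/-- the 3-cycle a → b → c → a -/
def c3 (a b c : α) : Perm α := Equiv.swap a b * Equiv.swap b c

lemma c3_apply_a {a b c : α} (hab : a ≠ b) (hac : a ≠ c) : c3 a b c a = b := by
  simp [c3, Equiv.swap_apply_of_ne_of_ne hab hac]

lemma c3_apply_b {a b c : α} (hac : a ≠ c) (hbc : b ≠ c) : c3 a b c b = c := by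
  simp [c3, Equiv.swap_apply_of_ne_of_ne (Ne.symm hac) (Ne.symm hbc)]

lemma c3_apply_c {a b c : α} : c3 a b c c = a := by simp [c3]

lemma c3_apply_other {a b c x : α} (hxa : x ≠ a) (hxb : x ≠ b) (hxc : x ≠ c) :
    c3 a b c x = x := by
  simp [c3, Equiv.swap_apply_of_ne_of_ne hxb hxc, Equiv.swap_apply_of_ne_of_ne hxa hxb]

lemma eq_c3 {a b c : α} (hab : a ≠ b) (hac : a ≠ c) (hbc : b ≠ c) (f : Perm α)
    (h1 : f a = b) (h2 : f b = c) (h3 : f c = a)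
    (h4 : ∀ x, x ≠ a → x ≠ b → x ≠ c → f x = x) : f = c3 a b c := by
  ext x
  by_cases hxa : x = a
  · subst hxa; rw [h1, c3_apply_a hab hac]
  by_cases hxb : x = b
  · subst hxb; rw [h2, c3_apply_b hac hbc]
  by_cases hxc : x = c
  · subst hxc; rw [h3, c3_apply_c]
  · rw [h4 x hxa hxb hxc, c3_apply_other hxa hxb hxc]

lemma c3_isThreeCycle {a b c : α} (hab : a ≠ b) (hac : a ≠ c) (hbc : b ≠ c) :
    (c3 a b c).IsThreeCycle := by
  have : c3 a b c = Equiv.swap b a * Equiv.swap b c := by rw [c3, Equiv.swap_comm a b]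
  rw [this]
  exact isThreeCycle_swap_mul_swap_same (Ne.symm hab) hbc hac

lemma c3_support {a b c : α} (hab : a ≠ b) (hac : a ≠ c) (hbc : b ≠ c) :
    (c3 a b c).support = {a, b, c} := by
  have h3 : (c3 a b c).support.card = 3 := (c3_isThreeCycle hab hac hbc).card_support
  have hsub : ({a, b, c} : Finset α) ⊆ (c3 a b c).support := by
    intro x hx
    simp only [Finset.mem_insert, Finset.mem_singleton] at hx
    rw [Equiv.Perm.mem_support]
    rcases hx with rfl | rfl | rfl
    · rw [c3_apply_a hab hac]; exact Ne.symm hab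
    · rw [c3_apply_b hac hbc]; exact Ne.symm hbc
    · rw [c3_apply_c]; exact hac
  refine (Finset.eq_of_subset_of_card_le hsub ?_).symm
  rw [h3, Finset.card_eq_three.mpr ⟨a, b, c, hab, hac, hbc, rfl⟩]

lemma c3_inv {a b c : α} (hab : a ≠ b) (hac : a ≠ c) (hbc : b ≠ c) :
    (c3 a b c)⁻¹ = c3 b a c := by
  refine eq_c3 (Ne.symm hab) hbc hac _ ?_ ?_ ?_ ?_
  · rw [Equiv.Perm.inv_eq_iff_eq, c3_apply_a hab hac]
  · rw [Equiv.Perm.inv_eq_iff_eq, c3_apply_c]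
  · rw [Equiv.Perm.inv_eq_iff_eq, c3_apply_b hac hbc]
  · intro x hxb hxa hxc
    rw [Equiv.Perm.inv_eq_iff_eq, c3_apply_other hxa hxb hxc]

lemma c3_rot {a b c : α} (hab : a ≠ b) (hac : a ≠ c) (hbc : b ≠ c) :
    c3 a b c = c3 c a b := by
  exact eq_c3 (Ne.symm hac) (Ne.symm hbc) hab (c3 a b c) c3_apply_c
    (c3_apply_a hab hac) (c3_apply_b hac hbc)
    (fun x hxc hxa hxb => c3_apply_other hxa hxb hxc)

lemma c3_conj (g : Perm α) (a b c : α) :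
    g * c3 a b c * g⁻¹ = c3 (g a) (g b) (g c) := by
  simp only [c3, Equiv.swap_apply_apply]
  group

section
variable {a b c : α}

lemma threeCycle_eq_c3 (hab : a ≠ b) (hac : a ≠ c) (hbc : b ≠ c)
    {u : Perm α} (hu : u.IsThreeCycle)
    (hsupp : u.support = {a, b, c}) : u = c3 a b c ∨ u = c3 a c b := by
  have hmem : ∀ x : α, x ∈ u.support ↔ (x = a ∨ x = b ∨ x = c) := by
    intro x; rw [hsupp]; simp
  have ha : u a ≠ a := by rw [← Equiv.Perm.mem_support, hmem]; tauto
  have hb : u b ≠ b := by rw [← Equiv.Perm.mem_support, hmem]; tauto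
  have hc : u c ≠ c := by rw [← Equiv.Perm.mem_support, hmem]; tauto
  have hmaps : ∀ x : α, x ∈ u.support → (u x = a ∨ u x = b ∨ u x = c) := by
    intro x hx
    rw [← hmem]; exact Equiv.Perm.apply_mem_support.mpr hx
  have ham : a ∈ u.support := (hmem a).mpr (Or.inl rfl)
  have hbm : b ∈ u.support := (hmem b).mpr (by tauto)
  have hcm : c ∈ u.support := (hmem c).mpr (by tauto)
  have hfix : ∀ x, x ≠ a → x ≠ b → x ≠ c → u x = x := by
    intro x h1 h2 h3
    by_contra h
    have := (hmem x).mp (Equiv.Perm.mem_support.mpr h)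
    tauto
  have hinj : Function.Injective u := u.injective
  rcases hmaps a ham with h1 | h1 | h1
  · exact absurd h1 ha
  · -- u a = b; then u b = c, u c = a
    left
    have hub : u b = c := by
      rcases hmaps b hbm with h2 | h2 | h2
      · exfalso
        rcases hmaps c hcm with h3 | h3 | h3
        · exact (Ne.symm hbc) (hinj (h3.trans h2.symm))
        · exact (Ne.symm hac) (hinj (h3.trans h1.symm))
        · exact hc h3
      · exact absurd h2 hb
      · exact h2
    have huc : u c = a := by
      rcases hmaps c hcm with h3 | h3 | h3
      · exact h3
      · exact absurd (hinj (h3.trans h1.symm)) (Ne.symm hac)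
      · exact absurd h3 hc
    exact eq_c3 hab hac hbc u h1 hub huc hfix
  · -- u a = c; then u c = b, u b = a
    right
    have huc : u c = b := by
      rcases hmaps c hcm with h3 | h3 | h3
      · exfalso
        rcases hmaps b hbm with h2 | h2 | h2
        · exact hbc (hinj (h2.trans h3.symm))
        · exact hb h2
        · exact (Ne.symm hab) (hinj (h2.trans h1.symm))
      · exact h3
      · exact absurd h3 hc
    have hub : u b = a := by
      rcases hmaps b hbm with h2 | h2 | h2
      · exact h2
      · exact absurd h2 hb
      · exact absurd (hinj (h2.trans h1.symm)) (Ne.symm hab)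
    exact eq_c3 hac hab (Ne.symm hbc) u h1 huc hub
      (fun x h1' h2' h3' => hfix x h1' h3' h2')

end

section
variable (H : Subgroup (Perm α))

/-- If all 3-cycles supported in `Δ` lie in `H`, and `H` contains a 3-cycle with
exactly one point `z` outside `Δ`, then all 3-cycles supported in `insert z Δ` lie in `H`. -/
lemma good_insert (Δ : Finset α)
    (hgood : ∀ u : Perm α, u.IsThreeCycle → u.support ⊆ Δ → u ∈ H)
    {x y z : α} (hx : x ∈ Δ) (hy : y ∈ Δ) (hz : z ∉ Δ) (hxy : x ≠ y)
    (hc : c3 x y z ∈ H) :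
    ∀ u : Perm α, u.IsThreeCycle → u.support ⊆ insert z Δ → u ∈ H := by
  have hne : ∀ p ∈ Δ, p ≠ z := fun p hp h => hz (h ▸ hp)
  have moveA : ∀ p q, p ∈ Δ → q ∈ Δ → p ≠ q → c3 p q z ∈ H → c3 q p z ∈ H := by
    intro p q hp hq hpq h
    have h2 := H.inv_mem h
    rwa [c3_inv hpq (hne p hp) (hne q hq)] at h2
  have moveB : ∀ p q t, p ∈ Δ → q ∈ Δ → t ∈ Δ → p ≠ q → t ≠ p → t ≠ q →
      c3 p q z ∈ H → c3 q t z ∈ H := by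
    intro p q t hp hq ht hpq htp htq h
    have hd : c3 p q t ∈ H := by
      refine hgood _ (c3_isThreeCycle hpq (Ne.symm htp) (Ne.symm htq)) ?_
      rw [c3_support hpq (Ne.symm htp) (Ne.symm htq)]
      intro w hw
      simp only [Finset.mem_insert, Finset.mem_singleton] at hw
      rcases hw with rfl | rfl | rfl <;> assumption
    have h2 := H.mul_mem (H.mul_mem hd h) (H.inv_mem hd)
    rwa [show c3 p q t * c3 p q z * (c3 p q t)⁻¹ = c3 q t z by
      rw [c3_conj, c3_apply_a hpq (Ne.symm htp), c3_apply_b (Ne.symm htp) (Ne.symm htq),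
        c3_apply_other (Ne.symm (hne p hp)) (Ne.symm (hne q hq)) (Ne.symm (hne t ht))]] at h2
  have hpair : ∀ p q, p ∈ Δ → q ∈ Δ → p ≠ q → c3 p q z ∈ H := by
    intro p q hp hq hpq
    by_cases hpx : x = p
    · subst hpx
      by_cases hqy : y = q
      · subst hqy; exact hc
      · have hqy' : q ≠ y := fun h => hqy h.symm
        exact moveB y x q hy hx hq (Ne.symm hxy) hqy' (Ne.symm hpq)
          (moveA x y hx hy hxy hc)
    · have hpx' : p ≠ x := fun h => hpx h.symm
      by_cases hpy : y = p
      · subst hpy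
        by_cases hqx : x = q
        · subst hqx; exact moveA x y hx hy hxy hc
        · have hqx' : q ≠ x := fun h => hqx h.symm
          exact moveB x y q hx hy hq hxy hqx' (Ne.symm hpq) hc
      · have hpy' : p ≠ y := fun h => hpy h.symm
        have hxp : c3 x p z ∈ H :=
          moveB y x p hy hx hp (Ne.symm hxy) hpy' hpx' (moveA x y hx hy hxy hc)
        by_cases hqx : x = q
        · subst hqx; exact moveA x p hx hp (Ne.symm hpx') hxp
        · have hqx' : q ≠ x := fun h => hqx h.symm
          by_cases hqy : y = q
          · subst hqy
            exact moveA y p hy hp (Ne.symm hpy')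
              (moveB x y p hx hy hp hxy hpx' hpy' hc)
          · exact moveB x p q hx hp hq hpx hqx' (Ne.symm hpq) hxp
  intro u hu hsub
  by_cases hzs : z ∈ u.support
  · have hcard : (u.support.erase z).card = 2 := by
      rw [Finset.card_erase_of_mem hzs, hu.card_support]
    obtain ⟨p, q, hpq, herase⟩ := Finset.card_eq_two.mp hcard
    have hpmem : p ∈ u.support ∧ p ≠ z := by
      have := herase ▸ (Finset.mem_insert_self p {q})
      exact ⟨Finset.mem_of_mem_erase this, Finset.ne_of_mem_erase this⟩
    have hqmem : q ∈ u.support ∧ q ≠ z := by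
      have : q ∈ u.support.erase z := by rw [herase]; simp
      exact ⟨Finset.mem_of_mem_erase this, Finset.ne_of_mem_erase this⟩
    have hp : p ∈ Δ := (Finset.mem_insert.mp (hsub hpmem.1)).resolve_left hpmem.2
    have hq : q ∈ Δ := (Finset.mem_insert.mp (hsub hqmem.1)).resolve_left hqmem.2
    have hsupp_eq : u.support = {p, q, z} := by
      rw [← Finset.insert_erase hzs, herase]
      ext w; simp; tauto
    rcases threeCycle_eq_c3 hpq hpmem.2 hqmem.2 hu hsupp_eq with h | h
    · rw [h]; exact hpair p q hp hq hpq
    · have h2 : c3 q p z ∈ H := hpair q p hq hp hpq.symm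
      rw [c3_rot hpq.symm hqmem.2 hpmem.2] at h2
      rw [c3_rot (Ne.symm hqmem.2) (Ne.symm hpmem.2) hpq.symm] at h2
      rw [h]; exact h2
  · exact hgood u hu
      (fun w hw => (Finset.mem_insert.mp (hsub hw)).resolve_left (fun h => hzs (h ▸ hw)))

end

lemma good_union (H : Subgroup (Perm α)) (Δ : Finset α)
    (hgood : ∀ u : Perm α, u.IsThreeCycle → u.support ⊆ Δ → u ∈ H)
    (hcard : 3 ≤ Δ.card) {c : Perm α} (hcH : c ∈ H) (hc3 : c.IsThreeCycle)
    {p : α} (hp : p ∈ Δ) (hps : p ∈ c.support) :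
    ∀ u : Perm α, u.IsThreeCycle → u.support ⊆ Δ ∪ c.support → u ∈ H := by
  have hcard2 : (c.support.erase p).card = 2 := by
    rw [Finset.card_erase_of_mem hps, hc3.card_support]
  obtain ⟨q, r, hqr, herase⟩ := Finset.card_eq_two.mp hcard2
  have hqmem : q ∈ c.support ∧ q ≠ p := by
    have : q ∈ c.support.erase p := by rw [herase]; simp
    exact ⟨Finset.mem_of_mem_erase this, Finset.ne_of_mem_erase this⟩
  have hrmem : r ∈ c.support ∧ r ≠ p := by
    have : r ∈ c.support.erase p := by rw [herase]; simp
    exact ⟨Finset.mem_of_mem_erase this, Finset.ne_of_mem_erase this⟩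
  have hpq : p ≠ q := Ne.symm hqmem.2
  have hpr : p ≠ r := Ne.symm hrmem.2
  have hsupp_eq : c.support = {p, q, r} := by
    rw [← Finset.insert_erase hps, herase]
  have hcpqr : c3 p q r ∈ H := by
    rcases threeCycle_eq_c3 hpq hpr hqr hc3 hsupp_eq with h | h
    · exact h ▸ hcH
    · have h2 := H.inv_mem hcH
      rw [h, c3_inv hpr hpq (Ne.symm hqr), c3_rot (Ne.symm hpr) (Ne.symm hqr) hpq,
        c3_rot hqr (Ne.symm hpq) (Ne.symm hpr)] at h2
      exact h2
  -- it suffices to handle supports inside `insert r (insert q Δ)`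
  have hsub2 : Δ ∪ c.support ⊆ insert r (insert q Δ) := by
    intro w hw
    rcases Finset.mem_union.mp hw with hw | hw
    · exact Finset.mem_insert_of_mem (Finset.mem_insert_of_mem hw)
    · rw [hsupp_eq] at hw
      simp only [Finset.mem_insert, Finset.mem_singleton] at hw
      rcases hw with rfl | rfl | rfl
      · exact Finset.mem_insert_of_mem (Finset.mem_insert_of_mem hp)
      · exact Finset.mem_insert_of_mem (Finset.mem_insert_self _ _)
      · exact Finset.mem_insert_self _ _
  suffices hgoal : ∀ u : Perm α, u.IsThreeCycle → u.support ⊆ insert r (insert q Δ) → u ∈ H by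
    intro u hu hsupp
    exact hgoal u hu (hsupp.trans hsub2)
  by_cases hq : q ∈ Δ
  · have e1 : insert q Δ = Δ := Finset.insert_eq_self.mpr hq
    by_cases hr : r ∈ Δ
    · rw [e1, Finset.insert_eq_self.mpr hr]
      exact hgood
    · rw [e1]
      exact good_insert H Δ hgood hp hq hr hpq hcpqr
  · by_cases hr : r ∈ Δ
    · have hrot : c3 r p q ∈ H := by
        rwa [c3_rot hpq hpr hqr] at hcpqr
      have h1 := good_insert H Δ hgood hr hp hq (Ne.symm hpr) hrot
      have e2 : insert r (insert q Δ) = insert q Δ :=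
        Finset.insert_eq_self.mpr (Finset.mem_insert_of_mem hr)
      rw [e2]
      exact h1
    · -- both q and r are new
      obtain ⟨s, hs, t, ht, hst⟩ := Finset.one_lt_card.mp
        (show 1 < (Δ.erase p).card by
          rw [Finset.card_erase_of_mem hp]; omega)
      have hsΔ : s ∈ Δ := Finset.mem_of_mem_erase hs
      have htΔ : t ∈ Δ := Finset.mem_of_mem_erase ht
      have hsp : s ≠ p := Finset.ne_of_mem_erase hs
      have htp : t ≠ p := Finset.ne_of_mem_erase ht
      have hsq : s ≠ q := fun h => hq (h ▸ hsΔ)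
      have hsr : s ≠ r := fun h => hr (h ▸ hsΔ)
      have htq : t ≠ q := fun h => hq (h ▸ htΔ)
      have htr : t ≠ r := fun h => hr (h ▸ htΔ)
      have hpst : c3 p s t ∈ H := by
        refine hgood _ (c3_isThreeCycle (Ne.symm hsp) (Ne.symm htp) hst) ?_
        rw [c3_support (Ne.symm hsp) (Ne.symm htp) hst]
        intro w hw
        simp only [Finset.mem_insert, Finset.mem_singleton] at hw
        rcases hw with rfl | rfl | rfl <;> assumption
      have hqst : c3 q s t ∈ H := by
        have h2 := H.mul_mem (H.mul_mem hcpqr hpst) (H.inv_mem hcpqr)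
        rwa [show c3 p q r * c3 p s t * (c3 p q r)⁻¹ = c3 q s t by
          rw [c3_conj, c3_apply_a hpq hpr,
            c3_apply_other hsp hsq hsr,
            c3_apply_other htp htq htr]] at h2
      have hstq : c3 s t q ∈ H := by
        rwa [c3_rot (Ne.symm hsq) (Ne.symm htq) hst,
          c3_rot htq (Ne.symm hst) (Ne.symm hsq)] at hqst
      have hΔ1 := good_insert H Δ hgood hsΔ htΔ hq hst hstq
      have hrq : r ∉ insert q Δ := by
        simp only [Finset.mem_insert]
        push_neg
        exact ⟨Ne.symm hqr, hr⟩
      exact good_insert H (insert q Δ) hΔ1 (Finset.mem_insert_of_mem hp)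
        (Finset.mem_insert_self q Δ) hrq hpq hcpqr

lemma good_univ (S : Set (Perm α)) (hS3 : ∀ g ∈ S, g.IsThreeCycle)
    (hSinv : ∀ g ∈ S, g⁻¹ ∈ S)
    (horb : ∀ b : α, (Set.univ : Set α) ⊆ MulAction.orbit (Subgroup.closure S) b)
    (Δ0 : Finset α) (h0 : 3 ≤ Δ0.card)
    (hgood0 : ∀ u : Perm α, u.IsThreeCycle → u.support ⊆ Δ0 → u ∈ Subgroup.closure S) :
    ∀ u : Perm α, u.IsThreeCycle → u ∈ Subgroup.closure S := by
  set H := Subgroup.closure S with hH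
  have aux : ∀ k : ℕ, ∀ Δ : Finset α, 3 ≤ Δ.card →
      (∀ u : Perm α, u.IsThreeCycle → u.support ⊆ Δ → u ∈ H) →
      Fintype.card α ≤ Δ.card + k →
      ∀ u : Perm α, u.IsThreeCycle → u ∈ H := by
    intro k
    induction k with
    | zero =>
      intro Δ h3 hgood hcard u hu
      have : Δ = Finset.univ := Finset.eq_univ_of_card Δ
        (le_antisymm (Finset.card_le_univ Δ) (by simpa using hcard))
      exact hgood u hu (this ▸ Finset.subset_univ u.support)
    | succ k ih =>
      intro Δ h3 hgood hcard u hu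
      by_cases hΔ : Δ = Finset.univ
      · exact hgood u hu (hΔ ▸ Finset.subset_univ u.support)
      · have hb : ∃ b : α, b ∉ Δ := by
          by_contra hcon
          push_neg at hcon
          exact hΔ (Finset.eq_univ_iff_forall.mpr hcon)
        obtain ⟨b, hbΔ⟩ := hb
        obtain ⟨σ', hσ'S, pt, hptΔ, hout⟩ :=
          exists_smul_notMem_of_subset_orbit_closure S (↑Δ : Set α) hSinv
            (fun x _ => horb b (Set.mem_univ x)) (by exact_mod_cast hbΔ)
            ⟨_, (Finset.card_pos.mp (by omega)).choose_spec⟩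
        have hσ'H : σ' ∈ H := Subgroup.subset_closure hσ'S
        have hσ'3 : σ'.IsThreeCycle := hS3 σ' hσ'S
        have hptΔ' : pt ∈ Δ := by exact_mod_cast hptΔ
        have houtΔ : σ' pt ∉ Δ := by
          simpa [Equiv.Perm.smul_def] using hout
        have hptsupp : pt ∈ σ'.support := by
          rw [Equiv.Perm.mem_support]
          intro h
          exact houtΔ (by rwa [h])
        have hgood' := good_union H Δ hgood h3 hσ'H hσ'3 hptΔ' hptsupp
        have hss : Δ ⊂ Δ ∪ σ'.support := by
          refine Finset.ssubset_iff_of_subset Finset.subset_union_left |>.mpr ?_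
          exact ⟨σ' pt, Finset.mem_union_right _ (Equiv.Perm.apply_mem_support.mpr hptsupp),
            houtΔ⟩
        have hlt := Finset.card_lt_card hss
        exact ih (Δ ∪ σ'.support) (le_trans h3 (Finset.card_le_card Finset.subset_union_left))
          hgood' (by omega) u hu
  exact aux (Fintype.card α) Δ0 h0 hgood0 (by omega)
abbrev V15 := Fin 15

/-- Let `G` be a transitive permutation group of degree 15
containing an element of order 7 and a 3-cycle, and consisting of even
permutations. Then `G = A₁₅`. -/
theorem transitive_degree_fifteen_eq_alternating
    (G : Subgroup (Equiv.Perm (Fin 15)))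
    (htrans : MulAction.IsPretransitive G (Fin 15))
    (σ : Equiv.Perm (Fin 15)) (hσ : σ ∈ G) (hσ7 : orderOf σ = 7)
    (τ : Equiv.Perm (Fin 15)) (hτ : τ ∈ G) (hτ3 : Equiv.Perm.IsThreeCycle τ)
    (heven : G ≤ alternatingGroup (Fin 15)) :
    G = alternatingGroup (Fin 15) := by
  classical
  set S : Set (Perm V15) := {g : Perm V15 | g ∈ G ∧ g.IsThreeCycle} with hS
  set H : Subgroup (Perm V15) := Subgroup.closure S with hHdef
  have hS3 : ∀ g ∈ S, g.IsThreeCycle := fun g hg => hg.2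
  have hSinv : ∀ g ∈ S, g⁻¹ ∈ S := fun g hg => ⟨G.inv_mem hg.1, hg.2.inv⟩
  have hHG : H ≤ G := (Subgroup.closure_le G).mpr (fun g hg => hg.1)
  have hτH : τ ∈ H := Subgroup.subset_closure ⟨hτ, hτ3⟩
  have hconj : ∀ g ∈ G, ∀ h ∈ H, g * h * g⁻¹ ∈ H := by
    intro g hg h hh
    induction hh using Subgroup.closure_induction with
    | mem s hs =>
      refine Subgroup.subset_closure ⟨G.mul_mem (G.mul_mem hg hs.1) (G.inv_mem hg), ?_⟩
      rw [← card_support_eq_three_iff, Equiv.Perm.card_support_conj]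
      exact hs.2.card_support
    | one => simpa using H.one_mem
    | mul x y hx hy hx' hy' =>
      have : g * (x * y) * g⁻¹ = (g * x * g⁻¹) * (g * y * g⁻¹) := by group
      rw [this]; exact H.mul_mem hx' hy'
    | inv x hx hx' =>
      have : g * x⁻¹ * g⁻¹ = (g * x * g⁻¹)⁻¹ := by group
      rw [this]; exact H.inv_mem hx'
  -- orbits of H
  have himg : ∀ g ∈ G, ∀ x : V15, (⇑g) '' (MulAction.orbit H x) = MulAction.orbit H (g x) := by
    intro g hg x
    ext y
    constructor
    · rintro ⟨w, hw, rfl⟩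
      obtain ⟨⟨h, hh⟩, rfl⟩ := MulAction.mem_orbit_iff.mp hw
      refine MulAction.mem_orbit_iff.mpr ⟨⟨g * h * g⁻¹, hconj g hg h hh⟩, ?_⟩
      show (g * h * g⁻¹) (g x) = g (h • x)
      simp [Equiv.Perm.mul_apply, Equiv.Perm.smul_def]
    · rintro ⟨⟨h, hh⟩, rfl⟩
      have hmem : (g⁻¹ * h * g) x ∈ MulAction.orbit H x :=
        MulAction.mem_orbit_iff.mpr ⟨⟨g⁻¹ * h * g, by
          have := hconj g⁻¹ (G.inv_mem hg) h hh
          simpa using this⟩, rfl⟩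
      refine ⟨(g⁻¹ * h * g) x, hmem, ?_⟩
      show g ((g⁻¹ * h * g) x) = h • (g x)
      simp [Equiv.Perm.mul_apply, Equiv.Perm.smul_def]
  let F : V15 → Finset V15 := fun x => (Set.toFinite (MulAction.orbit H x)).toFinset
  have hFmemiff : ∀ x y : V15, y ∈ F x ↔ y ∈ MulAction.orbit H x := by
    intro x y; exact Set.Finite.mem_toFinset _
  have hFmem : ∀ x, x ∈ F x := fun x => (hFmemiff x x).mpr (MulAction.mem_orbit_self x)
  have himgF : ∀ g ∈ G, ∀ x : V15, Finset.image (⇑g) (F x) = F (g x) := by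
    intro g hg x
    ext y
    rw [Finset.mem_image, hFmemiff]
    rw [← himg g hg x]
    constructor
    · rintro ⟨w, hw, rfl⟩; exact ⟨w, (hFmemiff x w).mp hw, rfl⟩
    · rintro ⟨w, hw, rfl⟩; exact ⟨w, (hFmemiff x w).mpr hw, rfl⟩
  have hcardF : ∀ g ∈ G, ∀ x : V15, (F (g x)).card = (F x).card := by
    intro g hg x
    rw [← himgF g hg x]
    exact Finset.card_image_of_injective _ g.injective
  -- base point in the support of τ
  have hτsupp : τ.support.Nonempty := Finset.card_pos.mp (by rw [hτ3.card_support]; omega)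
  obtain ⟨a, ha⟩ := hτsupp
  set k := (F a).card with hk
  have hkcard : ∀ x : V15, (F x).card = k := by
    intro x
    obtain ⟨g, hg⟩ := MulAction.exists_smul_eq G a x
    have : (g : Perm V15) a = x := hg
    rw [← this]
    exact hcardF g g.2 a
  have horbeq : ∀ x y : V15, y ∈ F x → F y = F x := by
    intro x y hy
    have : MulAction.orbit H y = MulAction.orbit H x :=
      MulAction.orbit_eq_iff.mpr ((hFmemiff x y).mp hy)
    simp only [F]
    congr 1
  have hdisj : ∀ x y : V15, F x ≠ F y → Disjoint (F x) (F y) := by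
    intro x y hne
    rw [Finset.disjoint_left]
    intro w hwx hwy
    exact hne ((horbeq x w hwx).symm.trans (horbeq y w hwy))
  -- k ≥ 3
  have hk3 : 3 ≤ k := by
    have h1 : τ a ≠ a := Equiv.Perm.mem_support.mp ha
    have h2 : τ (τ a) ≠ τ a :=
      Equiv.Perm.mem_support.mp (Equiv.Perm.apply_mem_support.mpr ha)
    have h3 : τ (τ a) ≠ a := by
      intro h
      have hord : τ ^ 3 = 1 := by rw [← hτ3.orderOf]; exact pow_orderOf_eq_one τ
      have : τ (τ (τ a)) = τ a := by rw [h]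
      have h9 : τ (τ (τ a)) = a := by
        have := congrArg (fun f : Perm V15 => f a) hord
        simpa [Equiv.Perm.mul_apply, pow_succ, Equiv.Perm.one_apply] using this
      rw [h9] at this
      exact h1 this.symm
    have hsub : ({a, τ a, τ (τ a)} : Finset V15) ⊆ F a := by
      intro w hw
      simp only [Finset.mem_insert, Finset.mem_singleton] at hw
      rcases hw with h | h | h
      · rw [h]; exact hFmem a
      · rw [h]; exact (hFmemiff a _).mpr (MulAction.mem_orbit_iff.mpr ⟨⟨τ, hτH⟩, rfl⟩)
      · rw [h]
        exact (hFmemiff a _).mpr (MulAction.mem_orbit_iff.mpr ⟨⟨τ * τ, H.mul_mem hτH hτH⟩, rfl⟩)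
    calc 3 = ({a, τ a, τ (τ a)} : Finset V15).card := by
            rw [Finset.card_eq_three.mpr ⟨a, τ a, τ (τ a), Ne.symm h1, Ne.symm h3, Ne.symm h2, rfl⟩]
      _ ≤ k := Finset.card_le_card hsub
  -- σ stabilizes every H-orbit
  have hσpow : ∀ m : ℕ, σ ^ m ∈ G := fun m => pow_mem hσ m
  have hσ71 : σ ^ 7 = 1 := by rw [← hσ7]; exact pow_orderOf_eq_one σ
  have hσinv : ∀ x : V15, F (σ x) = F x := by
    intro x
    by_contra hne
    have key : ∀ m : ℕ, 1 ≤ m → m ≤ 6 → F ((σ ^ m) x) = F x → False := by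
      intro m h1 h6 hm
      have hiter : ∀ t : ℕ, F ((σ ^ (t * m)) x) = F x := by
        intro t
        induction t with
        | zero => simp
        | succ t iht =>
          have hpe : σ ^ ((t + 1) * m) = σ ^ m * σ ^ (t * m) := by
            rw [← pow_add]; ring_nf
          rw [hpe, Equiv.Perm.mul_apply]
          calc F ((σ ^ m) ((σ ^ (t * m)) x))
              = Finset.image (⇑(σ ^ m)) (F ((σ ^ (t * m)) x)) :=
                (himgF _ (hσpow m) _).symm
            _ = Finset.image (⇑(σ ^ m)) (F x) := by rw [iht]
            _ = F ((σ ^ m) x) := himgF _ (hσpow m) x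
            _ = F x := hm
      obtain ⟨t, s, hts⟩ : ∃ t s : ℕ, t * m = 1 + 7 * s := by
        interval_cases m
        · exact ⟨1, 0, by norm_num⟩
        · exact ⟨4, 1, by norm_num⟩
        · exact ⟨5, 2, by norm_num⟩
        · exact ⟨2, 1, by norm_num⟩
        · exact ⟨3, 2, by norm_num⟩
        · exact ⟨6, 5, by norm_num⟩
      have h2 := hiter t
      rw [hts, show σ ^ (1 + 7 * s) = σ by
        rw [pow_add, pow_mul, hσ71, one_pow, mul_one, pow_one]] at h2
      exact hne h2
    have hdist : ∀ i j : ℕ, i < j → j < 7 → F ((σ ^ i) x) ≠ F ((σ ^ j) x) := by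
      intro i j hij hj7 heq
      have h1 : Finset.image (⇑(σ ^ (7 - j))) (F ((σ ^ i) x))
          = Finset.image (⇑(σ ^ (7 - j))) (F ((σ ^ j) x)) := by rw [heq]
      rw [himgF _ (hσpow _) _, himgF _ (hσpow _) _] at h1
      have e1 : (σ ^ (7 - j)) ((σ ^ i) x) = (σ ^ (7 - j + i)) x := by
        rw [pow_add, Equiv.Perm.mul_apply]
      have e2 : (σ ^ (7 - j)) ((σ ^ j) x) = x := by
        rw [← Equiv.Perm.mul_apply, ← pow_add, show 7 - j + j = 7 by omega, hσ71,
          Equiv.Perm.one_apply]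
      rw [e1, e2] at h1
      exact key (7 - j + i) (by omega) (by omega) h1
    have hB : ∀ i ∈ Finset.range 7, ∀ j ∈ Finset.range 7, i ≠ j →
        Disjoint (F ((σ ^ i) x)) (F ((σ ^ j) x)) := by
      intro i hi j hj hij
      rcases lt_or_gt_of_ne hij with h | h
      · exact hdisj _ _ (hdist i j h (Finset.mem_range.mp hj))
      · exact (hdisj _ _ (hdist j i h (Finset.mem_range.mp hi))).symm
    have hcard := Finset.card_biUnion hB
    have hsum : ∑ i ∈ Finset.range 7, (F ((σ ^ i) x)).card = 7 * k := by
      rw [Finset.sum_congr rfl (fun i _ => hkcard _), Finset.sum_const, Finset.card_range,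
        smul_eq_mul]
    have hle : ((Finset.range 7).biUnion (fun i => F ((σ ^ i) x))).card ≤ 15 := by
      have := Finset.card_le_univ ((Finset.range 7).biUnion (fun i => F ((σ ^ i) x)))
      simpa using this
    rw [hcard, hsum] at hle
    omega
  -- 7 ≤ k
  have hσne1 : σ ≠ 1 := by
    intro h; rw [h] at hσ7; simp at hσ7
  obtain ⟨x0, hx0⟩ : ∃ x : V15, σ x ≠ x := by
    by_contra hcon; push_neg at hcon
    exact hσne1 (Equiv.ext fun w => (hcon w).trans rfl)
  have hmemFiter : ∀ i : ℕ, (σ ^ i) x0 ∈ F x0 := by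
    intro i
    induction i with
    | zero => simpa using hFmem x0
    | succ i ih =>
      have heq : F ((σ ^ i) x0) = F x0 := horbeq _ _ ih
      have h2 : σ ((σ ^ i) x0) ∈ F (σ ((σ ^ i) x0)) := hFmem _
      rw [hσinv ((σ ^ i) x0), heq] at h2
      rw [pow_succ', Equiv.Perm.mul_apply]
      exact h2
  have hfix : ∀ d : ℕ, 1 ≤ d → d ≤ 6 → (σ ^ d) x0 = x0 → False := by
    intro d h1 h6 hd
    have hiter : ∀ t : ℕ, (σ ^ (t * d)) x0 = x0 := by
      intro t; induction t with
      | zero => simp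
      | succ t iht =>
        have hpe : σ ^ ((t + 1) * d) = σ ^ d * σ ^ (t * d) := by
          rw [← pow_add]; ring_nf
        rw [hpe, Equiv.Perm.mul_apply, iht, hd]
    obtain ⟨t, s, hts⟩ : ∃ t s : ℕ, t * d = 1 + 7 * s := by
      interval_cases d
      · exact ⟨1, 0, by norm_num⟩
      · exact ⟨4, 1, by norm_num⟩
      · exact ⟨5, 2, by norm_num⟩
      · exact ⟨2, 1, by norm_num⟩
      · exact ⟨3, 2, by norm_num⟩
      · exact ⟨6, 5, by norm_num⟩
    have h2 := hiter t
    rw [hts, show σ ^ (1 + 7 * s) = σ by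
      rw [pow_add, pow_mul, hσ71, one_pow, mul_one, pow_one]] at h2
    exact hx0 h2
  have hinj7 : Set.InjOn (fun i : ℕ => (σ ^ i) x0) ↑(Finset.range 7) := by
    intro i hi j hj hij_eq
    simp only [Finset.coe_range, Set.mem_Iio] at hi hj
    by_contra hne2
    rcases lt_or_gt_of_ne hne2 with h | h
    · have e : σ ^ j = σ ^ i * σ ^ (j - i) := by rw [← pow_add]; congr 1; omega
      apply hfix (j - i) (by omega) (by omega)
      apply (σ ^ i).injective
      rw [← Equiv.Perm.mul_apply, ← e]
      exact hij_eq.symm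
    · have e : σ ^ i = σ ^ j * σ ^ (i - j) := by rw [← pow_add]; congr 1; omega
      apply hfix (i - j) (by omega) (by omega)
      apply (σ ^ j).injective
      rw [← Equiv.Perm.mul_apply, ← e]
      exact hij_eq
  have hk7 : 7 ≤ k := by
    have himg7 : (Finset.image (fun i : ℕ => (σ ^ i) x0) (Finset.range 7)).card = 7 := by
      rw [Finset.card_image_of_injOn hinj7, Finset.card_range]
    have hsub : Finset.image (fun i : ℕ => (σ ^ i) x0) (Finset.range 7) ⊆ F x0 := by
      intro w hw
      obtain ⟨i, hi, rfl⟩ := Finset.mem_image.mp hw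
      exact hmemFiter i
    calc 7 = _ := himg7.symm
      _ ≤ (F x0).card := Finset.card_le_card hsub
      _ = k := hkcard x0
  by_cases hOa : F a = Finset.univ
  · -- H is transitive: conclude G = A₁₅
    have horb : ∀ b : V15, (Set.univ : Set V15) ⊆ MulAction.orbit H b := by
      intro b y _
      have hbmem : b ∈ MulAction.orbit H a := (hFmemiff a b).mp (hOa ▸ Finset.mem_univ b)
      have hymem : y ∈ MulAction.orbit H a := (hFmemiff a y).mp (hOa ▸ Finset.mem_univ y)
      rwa [MulAction.orbit_eq_iff.mpr hbmem]
    obtain ⟨p1, p2, p3, h12, h13, h23, hsupp⟩ := Finset.card_eq_three.mp hτ3.card_support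
    have hIinv : (c3 p1 p2 p3)⁻¹ = c3 p1 p3 p2 := by
      rw [c3_inv h12 h13 h23, c3_rot (Ne.symm h12) h23 h13,
        c3_rot (Ne.symm h23) (Ne.symm h13) (Ne.symm h12)]
    have hIinv' : (c3 p1 p3 p2)⁻¹ = c3 p1 p2 p3 := by
      rw [← hIinv, inv_inv]
    have hgood0 : ∀ u : Perm V15, u.IsThreeCycle → u.support ⊆ τ.support → u ∈ H := by
      intro u hu hsubτ
      have hsupp_u : u.support = {p1, p2, p3} := by
        rw [← hsupp]
        exact Finset.eq_of_subset_of_card_le hsubτ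
          (by rw [hu.card_support, hτ3.card_support])
      have hτmem' : ∀ v : Perm V15, v = c3 p1 p2 p3 ∨ v = c3 p1 p3 p2 → v ∈ H := by
        rintro v (rfl | rfl) <;>
          rcases threeCycle_eq_c3 h12 h13 h23 hτ3 hsupp with ht | ht
        · rw [← ht]; exact hτH
        · rw [← hIinv']; exact H.inv_mem (ht ▸ hτH)
        · rw [← hIinv]; exact H.inv_mem (ht ▸ hτH)
        · rw [← ht]; exact hτH
      exact hτmem' u (threeCycle_eq_c3 h12 h13 h23 hu hsupp_u)
    have hallH : ∀ u : Perm V15, u.IsThreeCycle → u ∈ H := by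
      have := good_univ S hS3 hSinv horb τ.support
        (by rw [hτ3.card_support]) hgood0
      exact this
    have hAH : alternatingGroup V15 ≤ H := by
      rw [← Equiv.Perm.closure_three_cycles_eq_alternating]
      exact (Subgroup.closure_le H).mpr (fun u hu => hallH u hu)
    exact le_antisymm heven (le_trans hAH hHG)
  · -- small orbits: contradiction with the element of order 7
    exfalso
    obtain ⟨b, hb⟩ : ∃ b : V15, b ∉ F a := by
      by_contra hcon; push_neg at hcon
      exact hOa (Finset.eq_univ_iff_forall.mpr hcon)
    have hFba : F b ≠ F a := fun h => hb (h ▸ hFmem b)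
    have hd1 : Disjoint (F a) (F b) := hdisj _ _ (Ne.symm hFba)
    have hcard_union : (F a ∪ F b).card = k + k := by
      rw [Finset.card_union_of_disjoint hd1, hkcard, hkcard]
    have h15 : (F a ∪ F b).card ≤ 15 := by simpa using Finset.card_le_univ (F a ∪ F b)
    have hk7' : k = 7 := by omega
    obtain ⟨cpt, hcpt⟩ : ∃ c : V15, c ∉ F a ∪ F b := by
      by_contra hcon; push_neg at hcon
      have : (F a ∪ F b) = Finset.univ := Finset.eq_univ_iff_forall.mpr hcon
      rw [this] at hcard_union
      simp [Finset.card_univ] at hcard_union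
      omega
    have hca : cpt ∉ F a := fun h => hcpt (Finset.mem_union_left _ h)
    have hcb : cpt ∉ F b := fun h => hcpt (Finset.mem_union_right _ h)
    have hd2 : Disjoint (F a ∪ F b) (F cpt) := by
      rw [Finset.disjoint_union_left]
      exact ⟨hdisj _ _ (fun h => hca (h ▸ hFmem cpt)),
        hdisj _ _ (fun h => hcb (h ▸ hFmem cpt))⟩
    have hle3 : (F a ∪ F b ∪ F cpt).card ≤ 15 := by
      simpa using Finset.card_le_univ (F a ∪ F b ∪ F cpt)
    rw [Finset.card_union_of_disjoint hd2, hcard_union, hkcard] at hle3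
    omega
end

section
/- Let M be a group having a presentation with generators A_i, B_i (i = 1,…,g), X_j (j = 1,…,α), Y_k (k = 1,…,β), Z_l (l = 1,…,γ) and relations ∏[A_i,B_i]·∏X_j·∏Y_k·∏Z_l = X_j³ = Y_k² = Z_l⁷ = 1. Then M/(M′M²) is an elementary abelian 2-group of rank 2g + β − 1 (when β ≥ 1), and hence M has exactly 2^{2g+β−1} − 1 subgroups of index 2. -/
open scoped commutatorElement

/-- Generators of the Fuchsian presentation of signature `(g; 3^[α], 2^[β], 7^[γ])`:
`A_i, B_i` (`i < g`), `X_j` (`j < α`), `Y_k` (`k < β`), `Z_l` (`l < γ`). -/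
def FuchsianGens (g α β γ : ℕ) : Type :=
  (Fin g ⊕ Fin g) ⊕ (Fin α ⊕ Fin β ⊕ Fin γ)

namespace FuchsianGens

variable {g α β γ : ℕ}

def A (i : Fin g) : FreeGroup (FuchsianGens g α β γ) := FreeGroup.of (.inl (.inl i))
def B (i : Fin g) : FreeGroup (FuchsianGens g α β γ) := FreeGroup.of (.inl (.inr i))
def X (j : Fin α) : FreeGroup (FuchsianGens g α β γ) := FreeGroup.of (.inr (.inl j))
def Y (k : Fin β) : FreeGroup (FuchsianGens g α β γ) :=
  FreeGroup.of (.inr (.inr (.inl k)))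
def Z (l : Fin γ) : FreeGroup (FuchsianGens g α β γ) :=
  FreeGroup.of (.inr (.inr (.inr l)))

/-- The long relator `∏ᵢ[Aᵢ,Bᵢ] · ∏ⱼXⱼ · ∏ₖYₖ · ∏ₗZₗ`. -/
def longRelator (g α β γ : ℕ) : FreeGroup (FuchsianGens g α β γ) :=
  ((List.finRange g).map (fun i => ⁅(A i : FreeGroup (FuchsianGens g α β γ)), B i⁆)).prod *
    ((List.finRange α).map X).prod *
    ((List.finRange β).map Y).prod *
    ((List.finRange γ).map Z).prod

/-- The relators: the long relator together with `Xⱼ³`, `Yₖ²`, `Zₗ⁷`. -/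
def rels (g α β γ : ℕ) : Set (FreeGroup (FuchsianGens g α β γ)) :=
  {r | (∃ j, r = X j ^ 3) ∨ (∃ k, r = Y k ^ 2) ∨ (∃ l, r = Z l ^ 7) ∨
    r = longRelator g α β γ}

end FuchsianGens

/-- The group with the standard Fuchsian presentation of signature
`(g; 3^[α], 2^[β], 7^[γ])`. -/
def FuchsianGroup (g α β γ : ℕ) : Type :=
  PresentedGroup (FuchsianGens.rels g α β γ)

noncomputable instance (g α β γ : ℕ) : Group (FuchsianGroup g α β γ) :=
  inferInstanceAs (Group (PresentedGroup (FuchsianGens.rels g α β γ)))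

/-- `M′M²`: the subgroup generated by commutators and squares. -/
def commSq (M : Type*) [Group M] : Subgroup M :=
  commutator M ⊔ Subgroup.closure {x : M | ∃ y : M, x = y ^ 2}

instance commSq_normal (M : Type*) [Group M] : (commSq M).Normal := by
  constructor
  intro n hn gg
  have h1 : ⁅gg, n⁆ ∈ commutator M :=
    Subgroup.commutator_mem_commutator (Subgroup.mem_top gg) (Subgroup.mem_top n)
  have h2 : gg * n * gg⁻¹ = ⁅gg, n⁆ * n := by group
  rw [h2]
  exact Subgroup.mul_mem _ ((le_sup_left : commutator M ≤ commSq M) h1) hn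

attribute [local instance] Classical.propDecidable

private lemma c2_cases (x : Multiplicative (ZMod 2)) : x = 1 ∨ x = Multiplicative.ofAdd 1 := by
  revert x; decide

private noncomputable def homOfIndexTwo {G : Type*} [Group G] (H : Subgroup G) (hH : H.index = 2) :
    G →* Multiplicative (ZMod 2) where
  toFun x := if x ∈ H then 1 else Multiplicative.ofAdd 1
  map_one' := if_pos H.one_mem
  map_mul' a b := by
    have h : a * b ∈ H ↔ (a ∈ H ↔ b ∈ H) := Subgroup.mul_mem_iff_of_index_two hH
    by_cases ha : a ∈ H <;> by_cases hb : b ∈ H <;>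
      simp only [h, ha, hb, iff_true, iff_false, true_iff, false_iff, not_true_eq_false,
        not_false_eq_true, if_true, if_false] <;> decide

private lemma ker_homOfIndexTwo {G : Type*} [Group G] (H : Subgroup G) (hH : H.index = 2) :
    (homOfIndexTwo H hH).ker = H := by
  ext x
  simp only [MonoidHom.mem_ker, homOfIndexTwo, MonoidHom.coe_mk, OneHom.coe_mk]
  by_cases hx : x ∈ H <;> simp only [hx, if_true, if_false, iff_true, iff_false]
  · intro hc
    exact absurd hc (by decide)

private lemma index_ker_eq_two {G : Type*} [Group G] (f : G →* Multiplicative (ZMod 2))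
    (hf : f ≠ 1) : f.ker.index = 2 := by
  rw [Subgroup.index_ker]
  obtain ⟨x, hx⟩ : ∃ x, f x ≠ 1 := by
    by_contra h
    push_neg at h
    exact hf (MonoidHom.ext fun x => h x)
  have hrange : f.range = ⊤ := by
    rw [Subgroup.eq_top_iff']
    intro y
    rcases c2_cases y with rfl | rfl
    · exact f.range.one_mem
    · exact ⟨x, (c2_cases (f x)).resolve_left hx⟩
  rw [hrange]
  rw [Nat.card_congr Subgroup.topEquiv.toEquiv, Nat.card_congr Multiplicative.toAdd, Nat.card_zmod]

private noncomputable def indexTwoEquiv (G : Type*) [Group G] :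
    {H : Subgroup G // H.index = 2} ≃ {f : G →* Multiplicative (ZMod 2) // f ≠ 1} where
  toFun H := ⟨homOfIndexTwo H.1 H.2, by
    intro hc
    have htop : H.1 = ⊤ := by
      rw [← ker_homOfIndexTwo H.1 H.2, hc]
      ext x; simp [MonoidHom.mem_ker]
    have h2 := H.2
    rw [htop, Subgroup.index_top] at h2
    omega⟩
  invFun f := ⟨f.1.ker, index_ker_eq_two f.1 f.2⟩
  left_inv H := Subtype.ext (ker_homOfIndexTwo H.1 H.2)
  right_inv f := Subtype.ext (by
    ext x
    simp only [homOfIndexTwo, MonoidHom.coe_mk, OneHom.coe_mk, MonoidHom.mem_ker]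
    by_cases hx : f.1 x = 1
    · simp [hx]
    · simp only [hx, if_false]
      exact ((c2_cases (f.1 x)).resolve_left hx).symm)

private lemma nat_card_subtype_ne {X : Type*} [Finite X] (a : X) :
    Nat.card {x : X // x ≠ a} = Nat.card X - 1 := by
  classical
  have h := Nat.card_congr (Equiv.sumCompl (· = a))
  rw [Nat.card_sum] at h
  have h1 : Nat.card {x : X // x = a} = 1 := Nat.card_eq_one_iff_unique.mpr
    ⟨⟨fun x y => Subtype.ext (x.2.trans y.2.symm)⟩, ⟨⟨a, rfl⟩⟩⟩
  have : Nat.card {x : X // ¬ x = a} = Nat.card {x : X // x ≠ a} := rfl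
  omega

private lemma commSq_le_ker' {G C : Type*} [Group G] [CommGroup C] (hC : ∀ x : C, x ^ 2 = 1)
    (f : G →* C) : commutator G ⊔ Subgroup.closure {x : G | ∃ y : G, x = y ^ 2} ≤ f.ker := by
  apply sup_le (Abelianization.commutator_subset_ker f)
  rw [Subgroup.closure_le]
  rintro x ⟨y, rfl⟩
  simp only [SetLike.mem_coe, MonoidHom.mem_ker, map_pow]
  exact hC (f y)

private def homQuotEquiv {G K : Type*} [Group G] [Group K] (N : Subgroup G) [N.Normal]
    (h : ∀ f : G →* K, N ≤ f.ker) : ((G ⧸ N) →* K) ≃ (G →* K) where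
  toFun f := f.comp (QuotientGroup.mk' N)
  invFun f := QuotientGroup.lift N f (fun x hx => h f hx)
  left_inv f := MonoidHom.ext fun q => QuotientGroup.induction_on q fun _ => rfl
  right_inv f := MonoidHom.ext fun _ => rfl

private def homCongrLeft {G G' K : Type*} [Group G] [Group G'] [Group K] (e : G ≃* G') :
    (G →* K) ≃ (G' →* K) where
  toFun f := f.comp e.symm.toMonoidHom
  invFun f := f.comp e.toMonoidHom
  left_inv f := MonoidHom.ext fun x => by simp
  right_inv f := MonoidHom.ext fun x => by simp

private def addHomLinEquiv {n : ℕ} [NeZero n] {M M₁ : Type*} [AddCommGroup M] [AddCommGroup M₁]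
    [Module (ZMod n) M] [Module (ZMod n) M₁] : (M →+ M₁) ≃ (M →ₗ[ZMod n] M₁) where
  toFun f := f.toZModLinearMap n
  invFun f := f.toAddMonoidHom
  left_inv f := rfl
  right_inv f := rfl

-- ### auxiliary construction
namespace FuchsianAux

open FuchsianGens Multiplicative

private def vlast (g b : ℕ) : (Fin g ⊕ Fin g ⊕ Fin b) → ZMod 2 :=
  fun s => match s with
  | .inr (.inr _) => 1
  | _ => 0

private def wgen {g α b γ : ℕ} : FuchsianGens g α (b + 1) γ → ((Fin g ⊕ Fin g ⊕ Fin b) → ZMod 2)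
  | .inl (.inl i) => Pi.single (.inl i) 1
  | .inl (.inr i) => Pi.single (.inr (.inl i)) 1
  | .inr (.inl _) => 0
  | .inr (.inr (.inl k)) =>
      if h : (k : ℕ) < b then Pi.single (.inr (.inr ⟨k, h⟩)) 1 else vlast g b
  | .inr (.inr (.inr _)) => 0

private lemma zmod2_add_self (x : ZMod 2) : x + x = 0 := by revert x; decide

private lemma sum_single {g b : ℕ} :
    (∑ k : Fin b, Pi.single (Sum.inr (Sum.inr k) : Fin g ⊕ Fin g ⊕ Fin b) (1 : ZMod 2)) =
      vlast g b := by
  funext s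
  rw [Finset.sum_apply]
  rcases s with i | i | m
  · simp [Pi.single_apply, vlast]
  · simp [Pi.single_apply, vlast]
  · simp [Pi.single_apply, vlast]

private lemma wgen_Y_castSucc {g α b γ : ℕ} (k : Fin b) :
    wgen (g := g) (α := α) (b := b) (γ := γ) (.inr (.inr (.inl k.castSucc)))
      = Pi.single (.inr (.inr k)) 1 := by
  have h : ((k.castSucc : Fin (b + 1)) : ℕ) < b := k.isLt
  have hk : (⟨((k.castSucc : Fin (b+1)) : ℕ), h⟩ : Fin b) = k := Fin.ext (by simp)
  simp only [wgen, h, dif_pos, hk]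

private lemma wgen_Y_last {g α b γ : ℕ} :
    wgen (g := g) (α := α) (b := b) (γ := γ) (.inr (.inr (.inl (Fin.last b)))) = vlast g b := by
  simp [wgen]

private lemma wgen_sum_Y {g α b γ : ℕ} :
    (∑ k : Fin (b + 1), wgen (g := g) (α := α) (b := b) (γ := γ) (.inr (.inr (.inl k)))) = 0 := by
  rw [Fin.sum_univ_castSucc]
  rw [Finset.sum_congr rfl fun k _ => wgen_Y_castSucc k, wgen_Y_last, sum_single]
  funext s
  exact zmod2_add_self _

private noncomputable def F (g α b γ : ℕ) :
    FreeGroup (FuchsianGens g α (b + 1) γ) →*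
      Multiplicative ((Fin g ⊕ Fin g ⊕ Fin b) → ZMod 2) :=
  FreeGroup.lift fun s => Multiplicative.ofAdd (wgen s)

private lemma F_of {g α b γ : ℕ} (s : FuchsianGens g α (b + 1) γ) :
    F g α b γ (FreeGroup.of s) = Multiplicative.ofAdd (wgen s) :=
  FreeGroup.lift_apply_of

private lemma sq_one {g b : ℕ} (x : Multiplicative ((Fin g ⊕ Fin g ⊕ Fin b) → ZMod 2)) :
    x ^ 2 = 1 := by
  rw [pow_two, ← ofAdd_toAdd x, ← ofAdd_add]
  rw [show toAdd x + toAdd x = 0 from funext fun s => zmod2_add_self _]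
  rfl

private lemma relcheck (g α b γ : ℕ) : ∀ r ∈ rels g α (b + 1) γ, F g α b γ r = 1 := by
  rintro r (⟨j, rfl⟩ | ⟨k, rfl⟩ | ⟨l, rfl⟩ | rfl)
  · rw [map_pow, X]; erw [F_of]
    show (Multiplicative.ofAdd (0 : (Fin g ⊕ Fin g ⊕ Fin b) → ZMod 2)) ^ 3 = 1
    simp
  · rw [map_pow]
    exact sq_one _
  · rw [map_pow, Z]; erw [F_of]
    show (Multiplicative.ofAdd (0 : (Fin g ⊕ Fin g ⊕ Fin b) → ZMod 2)) ^ 7 = 1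
    simp
  · rw [longRelator, map_mul, map_mul, map_mul, map_list_prod, map_list_prod, map_list_prod,
      map_list_prod]
    simp only [List.map_map]
    have hc : ((List.finRange g).map
        (⇑(F g α b γ) ∘ fun i => ⁅(A i : FreeGroup (FuchsianGens g α (b+1) γ)), B i⁆)).prod
          = 1 := by
      apply List.prod_eq_one
      intro x hx
      simp only [List.mem_map, Function.comp_apply] at hx
      obtain ⟨i, _, rfl⟩ := hx
      rw [map_commutatorElement]
      exact commutatorElement_eq_one_iff_commute.2 (Commute.all _ _)
    have hx : ((List.finRange α).map (⇑(F g α b γ) ∘ X)).prod = 1 := by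
      apply List.prod_eq_one
      intro x hx
      simp only [List.mem_map, Function.comp_apply] at hx
      obtain ⟨j, _, rfl⟩ := hx
      rw [X]; erw [F_of]
      rfl
    have hz : ((List.finRange γ).map (⇑(F g α b γ) ∘ Z)).prod = 1 := by
      apply List.prod_eq_one
      intro x hx
      simp only [List.mem_map, Function.comp_apply] at hx
      obtain ⟨l, _, rfl⟩ := hx
      rw [Z]; erw [F_of]
      rfl
    have hy : ((List.finRange (b+1)).map (⇑(F g α b γ) ∘ Y)).prod = 1 := by
      rw [← Fin.prod_univ_def]
      have h1 : ∀ k : Fin (b+1), (⇑(F g α b γ) ∘ Y) k =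
          Multiplicative.ofAdd (wgen (.inr (.inr (.inl k)))) := fun k => F_of _
      rw [Finset.prod_congr rfl fun k _ => h1 k, ← ofAdd_sum, wgen_sum_Y]
      rfl
    rw [hc, hx, hz, hy]
    simp

private theorem mainEquiv (g α b γ : ℕ) :
    Nonempty ((FuchsianGroup g α (b+1) γ ⧸ commSq (FuchsianGroup g α (b+1) γ)) ≃*
      Multiplicative ((Fin g ⊕ Fin g ⊕ Fin b) → ZMod 2)) := by
  classical
  let M := FuchsianGroup g α (b+1) γ
  let N := commSq M
  let Q := M ⧸ N
  let Φ : M →* Multiplicative ((Fin g ⊕ Fin g ⊕ Fin b) → ZMod 2) :=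
    PresentedGroup.toGroup (relcheck g α b γ)
  have hΦof : ∀ s, Φ (PresentedGroup.of s) = Multiplicative.ofAdd (wgen s) :=
    fun s => PresentedGroup.toGroup.of _
  -- commutativity and exponent 2 of the quotient
  have hcomm : ∀ x y : Q, x * y = y * x := by
    intro x y
    induction x using QuotientGroup.induction_on with | _ a =>
    induction y using QuotientGroup.induction_on with | _ c =>
    rw [← QuotientGroup.mk_mul, ← QuotientGroup.mk_mul, QuotientGroup.eq]
    have h : (a * c)⁻¹ * (c * a) = ⁅c⁻¹, a⁻¹⁆ := by group
    rw [h]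
    exact (le_sup_left : commutator M ≤ N)
      (Subgroup.commutator_mem_commutator (Subgroup.mem_top _) (Subgroup.mem_top _))
  letI instComm : CommGroup Q := { (inferInstance : Group Q) with mul_comm := hcomm }
  have hsq : ∀ x : Q, x ^ 2 = 1 := by
    intro x
    induction x using QuotientGroup.induction_on with | _ a =>
    have h : ((QuotientGroup.mk a : Q)) ^ 2 = QuotientGroup.mk (a ^ 2) := by
      rw [pow_two, pow_two, QuotientGroup.mk_mul]
    rw [h, QuotientGroup.eq_one_iff]
    exact (le_sup_right : Subgroup.closure {x : M | ∃ y : M, x = y ^ 2} ≤ N)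
      (Subgroup.subset_closure ⟨a, rfl⟩)
  letI instMod : Module (ZMod 2) (Additive Q) :=
    AddCommGroup.zmodModule (by
      intro x
      rw [two_nsmul]
      have h := hsq (Additive.toMul x)
      rw [pow_two] at h
      exact h)
  -- the two maps
  have hkerΦ : N ≤ Φ.ker := by
    apply sup_le (Abelianization.commutator_subset_ker Φ)
    rw [Subgroup.closure_le]
    rintro x ⟨y, rfl⟩
    simp only [SetLike.mem_coe, MonoidHom.mem_ker, map_pow]
    exact sq_one _
  let Φbar : Q →* Multiplicative ((Fin g ⊕ Fin g ⊕ Fin b) → ZMod 2) :=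
    QuotientGroup.lift N Φ (fun x hx => hkerΦ hx)
  let L : Additive Q →ₗ[ZMod 2] ((Fin g ⊕ Fin g ⊕ Fin b) → ZMod 2) :=
    (MonoidHom.toAdditiveLeft Φbar).toZModLinearMap 2
  let pQ : FreeGroup (FuchsianGens g α (b+1) γ) →* Q :=
    (QuotientGroup.mk' N).comp (PresentedGroup.mk (rels g α (b+1) γ))
  let gen : (Fin g ⊕ Fin g ⊕ Fin b) → FuchsianGens g α (b+1) γ := fun s =>
    match s with
    | .inl i => .inl (.inl i)
    | .inr (.inl i) => .inl (.inr i)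
    | .inr (.inr k) => .inr (.inr (.inl k.castSucc))
  let v : (Fin g ⊕ Fin g ⊕ Fin b) → Additive Q :=
    fun s => Additive.ofMul (pQ (FreeGroup.of (gen s)))
  let Ψ : ((Fin g ⊕ Fin g ⊕ Fin b) → ZMod 2) →ₗ[ZMod 2] Additive Q :=
    Fintype.linearCombination (ZMod 2) v
  have key : ∀ t : FuchsianGens g α (b+1) γ,
      L (Additive.ofMul (pQ (FreeGroup.of t))) = wgen t := by
    intro t
    show Multiplicative.toAdd (Φ (PresentedGroup.of t)) = wgen t
    rw [hΦof t]
    rfl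
  have hLv : ∀ s, L (v s) = Pi.single s 1 := by
    rintro (i | i | k)
    · exact key _
    · exact key _
    · rw [show v (Sum.inr (Sum.inr k)) =
        Additive.ofMul (pQ (FreeGroup.of (gen (Sum.inr (Sum.inr k))))) from rfl, key]
      exact wgen_Y_castSucc k
  have hLΨ : ∀ w, L (Ψ w) = w := by
    intro w
    rw [show Ψ w = ∑ s, w s • v s from Fintype.linearCombination_apply _ _ _, map_sum]
    have h1 : ∀ s, L (w s • v s) = Pi.single s (w s) := by
      intro s
      rw [map_smul, hLv, ← Pi.single_smul, smul_eq_mul, mul_one]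
    rw [Finset.sum_congr rfl fun s _ => h1 s, Finset.univ_sum_single]
  have hΨsingle : ∀ s, Ψ (Pi.single s 1) = v s := by
    intro s
    rw [show Ψ (Pi.single s 1) = (1 : ZMod 2) • v s from
      Fintype.linearCombination_apply_single _ _ _ _, one_smul]
  -- surjectivity
  let H : Subgroup Q :=
    { carrier := {y : Q | ∃ w, Additive.toMul (Ψ w) = y}
      one_mem' := ⟨0, by rw [map_zero]; rfl⟩
      mul_mem' := by
        rintro y1 y2 ⟨w1, rfl⟩ ⟨w2, rfl⟩
        exact ⟨w1 + w2, by rw [map_add]; rfl⟩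
      inv_mem' := by
        rintro y ⟨w, rfl⟩
        exact ⟨-w, by rw [map_neg]; rfl⟩ }
  have hgenmem : ∀ s, pQ (FreeGroup.of (gen s)) ∈ H := fun s => ⟨Pi.single s 1, by
    rw [hΨsingle]; rfl⟩
  have hrelone : ∀ r ∈ rels g α (b+1) γ, pQ r = 1 := by
    intro r hr
    have h : PresentedGroup.mk (rels g α (b+1) γ) r = 1 := by
      rw [show PresentedGroup.mk (rels g α (b+1) γ) r = QuotientGroup.mk r from rfl]
      erw [QuotientGroup.eq_one_iff]
      exact Subgroup.subset_normalClosure hr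
    show (QuotientGroup.mk' N) (PresentedGroup.mk (rels g α (b+1) γ) r) = 1
    rw [h]; exact map_one _
  have hXone : ∀ j : Fin α, pQ (X j) = 1 := by
    intro j
    have h3 : pQ (X j) ^ 3 = 1 := by rw [← map_pow]; exact hrelone _ (Or.inl ⟨j, rfl⟩)
    have h2 := hsq (pQ (X j))
    calc pQ (X j) = pQ (X j) ^ 3 * (pQ (X j) ^ 2)⁻¹ := by group
    _ = 1 := by rw [h3, h2]; group
  have hZone : ∀ l : Fin γ, pQ (Z l) = 1 := by
    intro l
    have h7 : pQ (Z l) ^ 7 = 1 := by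
      rw [← map_pow]; exact hrelone _ (Or.inr (Or.inr (Or.inl ⟨l, rfl⟩)))
    have h2 := hsq (pQ (Z l))
    calc pQ (Z l) = pQ (Z l) ^ 7 * ((pQ (Z l) ^ 2) ^ 3)⁻¹ := by group
    _ = 1 := by rw [h7, h2]; group
  have hYlast : pQ (Y (Fin.last b)) ∈ H := by
    have hrel : pQ (longRelator g α (b+1) γ) = 1 := hrelone _ (Or.inr (Or.inr (Or.inr rfl)))
    rw [longRelator, map_mul, map_mul, map_mul, map_list_prod, map_list_prod, map_list_prod,
      map_list_prod] at hrel
    simp only [List.map_map] at hrel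
    have hc : ((List.finRange g).map
        (⇑pQ ∘ fun i => ⁅(A i : FreeGroup (FuchsianGens g α (b+1) γ)), B i⁆)).prod = 1 := by
      apply List.prod_eq_one
      intro x hx
      simp only [List.mem_map, Function.comp_apply] at hx
      obtain ⟨i, _, rfl⟩ := hx
      rw [map_commutatorElement]
      exact commutatorElement_eq_one_iff_commute.2 (hcomm _ _)
    have hxp : ((List.finRange α).map (⇑pQ ∘ X)).prod = 1 :=
      List.prod_eq_one (by
        intro x hx
        simp only [List.mem_map, Function.comp_apply] at hx
        obtain ⟨j, _, rfl⟩ := hx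
        exact hXone j)
    have hzp : ((List.finRange γ).map (⇑pQ ∘ Z)).prod = 1 :=
      List.prod_eq_one (by
        intro x hx
        simp only [List.mem_map, Function.comp_apply] at hx
        obtain ⟨l, _, rfl⟩ := hx
        exact hZone l)
    rw [hc, hxp, hzp, one_mul, mul_one, one_mul] at hrel
    rw [show ((List.finRange (b+1)).map (⇑pQ ∘ Y)).prod = ∏ k : Fin (b+1), pQ (Y k) from
      (Fin.prod_univ_def _).symm, Fin.prod_univ_castSucc] at hrel
    have hYl : pQ (Y (Fin.last b)) = (∏ k : Fin b, pQ (Y k.castSucc))⁻¹ := by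
      rw [eq_inv_iff_mul_eq_one, hcomm]
      exact hrel
    rw [hYl]
    apply H.inv_mem
    apply Subgroup.prod_mem
    intro k _
    exact hgenmem (Sum.inr (Sum.inr k))
  have hmemrange : ∀ y : Q, y ∈ H := by
    intro y
    induction y using QuotientGroup.induction_on with | _ z =>
    have hz : z ∈ H.comap (QuotientGroup.mk' N) := by
      apply PresentedGroup.generated_by
      rintro ((i | i) | j | k | l)
      · exact hgenmem (Sum.inl i)
      · exact hgenmem (Sum.inr (Sum.inl i))
      · show pQ (X j) ∈ H
        rw [hXone j]
        exact H.one_mem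
      · rcases Fin.eq_castSucc_or_eq_last k with ⟨k', rfl⟩ | rfl
        · exact hgenmem (Sum.inr (Sum.inr k'))
        · exact hYlast
      · show pQ (Z l) ∈ H
        rw [hZone l]
        exact H.one_mem
    exact hz
  have hinj : Function.Injective Ψ := fun w w' h => by
    have h2 := congrArg L h
    rwa [hLΨ, hLΨ] at h2
  have hsurj : Function.Surjective Ψ := by
    intro x
    obtain ⟨w, hw⟩ := hmemrange (Additive.toMul x)
    exact ⟨w, Additive.toMul.injective hw⟩
  let eAdd : ((Fin g ⊕ Fin g ⊕ Fin b) → ZMod 2) ≃+ Additive Q :=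
    { Equiv.ofBijective Ψ ⟨hinj, hsurj⟩ with map_add' := map_add Ψ }
  exact ⟨(AddEquiv.toMultiplicativeLeft eAdd).symm⟩
end FuchsianAux

/-- For the Fuchsian presentation `M` of signature
`(g; 3^[α], 2^[β], 7^[γ])` with `β ≥ 1`, the quotient `M/(M′M²)` is an elementary
abelian 2-group of rank `2g + β − 1`, and hence `M` has exactly `2^(2g+β−1) − 1`
subgroups of index 2. -/
theorem fuchsian_mod_squares_elementary_abelian
    (g α β γ : ℕ) (hβ : 1 ≤ β) :
    Nonempty ((FuchsianGroup g α β γ ⧸ commSq (FuchsianGroup g α β γ)) ≃*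
      Multiplicative (Fin (2 * g + β - 1) → ZMod 2)) ∧
    Nat.card {H : Subgroup (FuchsianGroup g α β γ) // H.index = 2} =
      2 ^ (2 * g + β - 1) - 1 := by
  classical
  obtain ⟨b, rfl⟩ : ∃ b, β = b + 1 := ⟨β - 1, (Nat.succ_pred_eq_of_pos hβ).symm⟩
  obtain ⟨e⟩ := FuchsianAux.mainEquiv g α b γ
  have hidx : g + (g + b) = 2 * g + (b + 1) - 1 := by omega
  let eIdx : (Fin g ⊕ Fin g ⊕ Fin b) ≃ Fin (2 * g + (b + 1) - 1) :=
    ((Equiv.sumCongr (Equiv.refl (Fin g)) finSumFinEquiv).trans finSumFinEquiv).trans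
      (finCongr hidx)
  let ePi : ((Fin g ⊕ Fin g ⊕ Fin b) → ZMod 2) ≃+ (Fin (2 * g + (b + 1) - 1) → ZMod 2) :=
    { Equiv.arrowCongr eIdx (Equiv.refl (ZMod 2)) with
      map_add' := fun x y => rfl }
  refine ⟨⟨e.trans (AddEquiv.toMultiplicative ePi)⟩, ?_⟩
  -- counting index-two subgroups
  have hker : ∀ f : FuchsianGroup g α (b + 1) γ →* Multiplicative (ZMod 2),
      commSq (FuchsianGroup g α (b + 1) γ) ≤ f.ker :=
    fun f => commSq_le_ker' (by decide) f
  let E1 : ((FuchsianGroup g α (b + 1) γ ⧸ commSq (FuchsianGroup g α (b + 1) γ)) →*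
      Multiplicative (ZMod 2)) ≃
      (FuchsianGroup g α (b + 1) γ →* Multiplicative (ZMod 2)) :=
    homQuotEquiv _ hker
  let E2 : ((FuchsianGroup g α (b + 1) γ ⧸ commSq (FuchsianGroup g α (b + 1) γ)) →*
      Multiplicative (ZMod 2)) ≃
      (Multiplicative ((Fin g ⊕ Fin g ⊕ Fin b) → ZMod 2) →* Multiplicative (ZMod 2)) :=
    homCongrLeft e
  let E3 : (Multiplicative ((Fin g ⊕ Fin g ⊕ Fin b) → ZMod 2) →* Multiplicative (ZMod 2)) ≃
      (((Fin g ⊕ Fin g ⊕ Fin b) → ZMod 2) →+ ZMod 2) :=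
    MonoidHom.toAdditive
  let E4 : ((((Fin g ⊕ Fin g ⊕ Fin b) → ZMod 2) →+ ZMod 2)) ≃
      ((((Fin g ⊕ Fin g ⊕ Fin b) → ZMod 2)) →ₗ[ZMod 2] ZMod 2) :=
    addHomLinEquiv
  let E5 := (LinearEquiv.piRing (ZMod 2) (ZMod 2) (Fin g ⊕ Fin g ⊕ Fin b) (ZMod 2)).toEquiv
  let EH : (FuchsianGroup g α (b + 1) γ →* Multiplicative (ZMod 2)) ≃
      ((Fin g ⊕ Fin g ⊕ Fin b) → ZMod 2) :=
    E1.symm.trans (E2.trans (E3.trans (E4.trans E5)))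
  haveI : Finite (FuchsianGroup g α (b + 1) γ →* Multiplicative (ZMod 2)) :=
    Finite.of_equiv _ EH.symm
  have hcard2 : Nat.card (FuchsianGroup g α (b + 1) γ →* Multiplicative (ZMod 2)) =
      2 ^ (2 * g + (b + 1) - 1) := by
    rw [Nat.card_congr EH, Nat.card_fun, Nat.card_zmod]
    congr 1
    rw [Nat.card_eq_fintype_card]
    simp only [Fintype.card_sum, Fintype.card_fin]
    omega
  rw [Nat.card_congr (indexTwoEquiv (FuchsianGroup g α (b + 1) γ)), nat_card_subtype_ne 1,
    hcard2]
end
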